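/- Let Γ be a countable group with a totally ergodic, non-trivial measure-preserving action on (X,μ). If C ⊆ Γ is a subset such that the set of points x with C contained in the stabilizer of x has positive measure, then the subgroup generated by C is finite. -/

import Mathlib

open MeasureTheory

/-- A subgroup `N` of `Γ` acts ergodically on `(X, μ)`. -/
def ErgodicSubgroup {Γ X : Type*} [Group Γ] [MulAction Γ X] [MeasurableSpace X]
    (μ : Measure X) (N : Subgroup Γ) : Prop :=
  ∀ A : Set X, MeasurableSet A → (∀ γ ∈ N, (fun x => γ • x) ⁻¹' A = A) →
    μ A = 0 ∨ μ A = 1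

/-- The action of `Γ` on `(X, μ)` is totally ergodic: every infinite subgroup
acts ergodically. -/
def TotallyErgodic {Γ X : Type*} [Group Γ] [MulAction Γ X] [MeasurableSpace X]
    (μ : Measure X) : Prop :=
  ∀ N : Subgroup Γ, (N : Set Γ).Infinite → ErgodicSubgroup μ N

/-- A zero-one valued probability measure on a countably separated space is a Dirac measure. -/
lemma eq_dirac_of_zero_one {X : Type*} [MeasurableSpace X]
    [MeasurableSpace.CountablySeparated X] [MeasurableSingletonClass X]
    (μ : Measure X) [IsProbabilityMeasure μ]
    (h01 : ∀ A : Set X, MeasurableSet A → μ A = 0 ∨ μ A = 1) :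
    ∃ x : X, μ = Measure.dirac x := by
  have hne : Nonempty X := by
    by_contra h
    have : μ Set.univ = 0 := by
      rw [Set.univ_eq_empty_iff.2 (not_nonempty_iff.1 h)]; simp
    simp [measure_univ] at this
  obtain ⟨x, hx⟩ := Filter.exists_singleton_mem_of_forall_separating (l := ae μ)
    MeasurableSet (fun U hU => by
      rcases h01 U hU with h0 | h1
      · right
        rw [mem_ae_iff]
        simpa using h0
      · left
        rw [mem_ae_iff]
        have := measure_compl hU (measure_ne_top μ U)
        rw [h1, measure_univ] at this
        simpa using this)
  rw [mem_ae_iff] at hx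
  have hx1 : μ {x} = 1 :=
    (prob_compl_eq_zero_iff (measurableSet_singleton x)).1 hx
  refine ⟨x, Measure.ext fun s hs => ?_⟩
  rw [Measure.dirac_apply' x hs]
  by_cases hxs : x ∈ s
  · rw [Set.indicator_of_mem hxs, Pi.one_apply]
    refine le_antisymm prob_le_one ?_
    calc (1 : ENNReal) = μ {x} := hx1.symm
    _ ≤ μ s := measure_mono (Set.singleton_subset_iff.2 hxs)
  · rw [Set.indicator_of_notMem hxs]
    have : μ s ≤ μ {x}ᶜ := measure_mono fun y hy => by
      simp only [Set.mem_compl_iff, Set.mem_singleton_iff]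
      rintro rfl; exact hxs hy
    rw [hx] at this
    exact le_antisymm this zero_le

theorem stmt_3 {Γ X : Type*} [Group Γ] [Countable Γ]
    [MeasurableSpace X] [StandardBorelSpace X] [MulAction Γ X]
    (μ : Measure X) [IsProbabilityMeasure μ]
    (hmp : ∀ γ : Γ, MeasurePreserving (fun x => γ • x) μ μ)
    (hte : TotallyErgodic (Γ := Γ) μ)
    (hnontriv : ∀ x : X, μ ≠ Measure.dirac x)
    (C : Set Γ)
    (hmeas : MeasurableSet {x : X | ∀ γ ∈ C, γ • x = x})
    (hpos : 0 < μ {x : X | ∀ γ ∈ C, γ • x = x}) :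
    ((Subgroup.closure C : Subgroup Γ) : Set Γ).Finite := by
  by_contra hinf
  set N : Subgroup Γ := Subgroup.closure C with hN
  have hNinf : (N : Set Γ).Infinite := hinf
  set F : Set X := {x : X | ∀ γ ∈ C, γ • x = x} with hF
  -- Points in F are fixed by the whole closure N
  have hFN : ∀ x ∈ F, ∀ γ ∈ N, γ • x = x := by
    intro x hx γ hγ
    have : N ≤ MulAction.stabilizer Γ x :=
      (Subgroup.closure_le _).2 fun c hc => hx c hc
    exact this hγ
  have herg := hte N hNinf
  -- F is exactly invariant under N
  have hinvF : ∀ γ ∈ N, (fun x => γ • x) ⁻¹' F = F := by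
    intro γ hγ
    ext x
    simp only [Set.mem_preimage]
    constructor
    · intro h
      have h2 := hFN _ h γ⁻¹ (inv_mem hγ)
      rw [inv_smul_smul] at h2
      rw [h2]
      exact h
    · intro h
      rw [hFN x h γ hγ]
      exact h
  have hF1 : μ F = 1 := by
    rcases herg F hmeas hinvF with h | h
    · rw [h] at hpos; exact absurd rfl hpos.ne
    · exact h
  have hFc : μ Fᶜ = 0 := (prob_compl_eq_zero_iff hmeas).2 hF1
  -- every measurable set has measure 0 or 1
  have h01 : ∀ A : Set X, MeasurableSet A → μ A = 0 ∨ μ A = 1 := by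
    intro A hA
    have hinvAF : ∀ γ ∈ N, (fun x => γ • x) ⁻¹' (A ∩ F) = A ∩ F := by
      intro γ hγ
      ext x
      simp only [Set.mem_preimage, Set.mem_inter_iff]
      by_cases hx : x ∈ F
      · rw [hFN x hx γ hγ]
      · constructor
        · rintro ⟨-, hsF⟩
          have : (fun x => γ • x) ⁻¹' F = F := hinvF γ hγ
          have hx' : x ∈ (fun x => γ • x) ⁻¹' F := hsF
          rw [this] at hx'
          exact absurd hx' hx
        · rintro ⟨-, hsF⟩; exact absurd hsF hx
    have hμAF : μ (A ∩ F) = μ A := by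
      refine le_antisymm (measure_mono Set.inter_subset_left) ?_
      calc μ A ≤ μ (A ∩ F) + μ Fᶜ := by
            refine (measure_mono ?_).trans (measure_union_le _ _)
            intro x hx
            by_cases h : x ∈ F
            · exact Or.inl ⟨hx, h⟩
            · exact Or.inr h
        _ = μ (A ∩ F) := by rw [hFc, add_zero]
    rcases herg (A ∩ F) (hA.inter hmeas) hinvAF with h | h
    · left; rw [← hμAF]; exact h
    · right; rw [← hμAF]; exact h
  obtain ⟨x, hx⟩ := eq_dirac_of_zero_one μ h01
  exact hnontriv x hx
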